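/- Let b₀, b₁, b₂ : ℝ → ℝ be differentiable with b₀(t) > 0, b₂(t) > 0, and let c₀, c₁, c₂ be constants with c₀ > 0, c₂ > 0, such that the integrability condition √(c₀ c₂/(b₀(t) b₂(t))) · [b₁(t) + (1/2)(b₂'(t)/b₂(t) − b₀'(t)/b₀(t))] = c₁ holds for all t. Set α(t) = (b₂(t) c₀/(b₀(t) c₂))^{1/4} and D(t) = √(b₀(t) b₂(t)/(c₀ c₂)). Then for every differentiable solution ξ : ℝ → ℝ² of ξ'(t) = [[b₁(t)/2, b₀(t)], [−b₂(t), −b₁(t)/2]] ξ(t), the transformed curve ξ̃(t) = diag(α(t), α(t)⁻¹) ξ(t) satisfies ξ̃'(t) = D(t) [[c₁/2, c₀], [−c₂, −c₁/2]] ξ̃(t) for all t. -/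

import Mathlib

/-- Under the integrability condition
`√(c₀ c₂/(b₀ b₂))·[b₁ + (1/2)(b₂'/b₂ − b₀'/b₀)] = c₁`, setting
`α = (b₂ c₀/(b₀ c₂))^{1/4}` and `D = √(b₀ b₂/(c₀ c₂))`, every solution
`ξ = (x, p)` of the system `x' = (b₁/2) x + b₀ p`, `p' = −b₂ x − (b₁/2) p` is mapped by
`ξ̃ = (α x, α⁻¹ p)` to a solution of `x̃' = D(c₁/2 x̃ + c₀ p̃)`, `p̃' = D(−c₂ x̃ − c₁/2 p̃)`. -/
theorem diag_transform_maps_solutions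
    (b₀ b₁ b₂ : ℝ → ℝ)
    (hb₀ : Differentiable ℝ b₀) (hb₁ : Differentiable ℝ b₁) (hb₂ : Differentiable ℝ b₂)
    (hb₀pos : ∀ t, 0 < b₀ t) (hb₂pos : ∀ t, 0 < b₂ t)
    (c₀ c₁ c₂ : ℝ) (hc₀ : 0 < c₀) (hc₂ : 0 < c₂)
    (hint : ∀ t, Real.sqrt (c₀ * c₂ / (b₀ t * b₂ t)) *
      (b₁ t + (1 / 2) * (deriv b₂ t / b₂ t - deriv b₀ t / b₀ t)) = c₁)
    (α D : ℝ → ℝ)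
    (hα : ∀ t, α t = (b₂ t * c₀ / (b₀ t * c₂)) ^ ((1 : ℝ) / 4))
    (hD : ∀ t, D t = Real.sqrt (b₀ t * b₂ t / (c₀ * c₂)))
    (x p : ℝ → ℝ)
    (hx : ∀ t, HasDerivAt x (b₁ t / 2 * x t + b₀ t * p t) t)
    (hp : ∀ t, HasDerivAt p (-b₂ t * x t - b₁ t / 2 * p t) t) :
    ∀ t, HasDerivAt (fun s => α s * x s)
        (D t * (c₁ / 2 * (α t * x t) + c₀ * ((α t)⁻¹ * p t))) t ∧
      HasDerivAt (fun s => (α s)⁻¹ * p s)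
        (D t * (-c₂ * (α t * x t) - c₁ / 2 * ((α t)⁻¹ * p t))) t := by
  intro t
  have hb₀t := hb₀pos t
  have hb₂t := hb₂pos t
  -- basic positivity
  have hgpos : 0 < b₂ t * c₀ / (b₀ t * c₂) := by positivity
  have hαpos : 0 < α t := by rw [hα t]; positivity
  have hDpos : 0 < D t := by
    rw [hD t]; exact Real.sqrt_pos.mpr (by positivity)
  -- derivative of the inner rational function g
  have hg' : HasDerivAt (fun s => b₂ s * c₀ / (b₀ s * c₂))
      ((deriv b₂ t * c₀ * (b₀ t * c₂) - b₂ t * c₀ * (deriv b₀ t * c₂)) / (b₀ t * c₂) ^ 2) t :=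
    ((hb₂ t).hasDerivAt.mul_const c₀).div ((hb₀ t).hasDerivAt.mul_const c₂)
      (by positivity)
  -- derivative of α
  have hαfun : α = fun s => (b₂ s * c₀ / (b₀ s * c₂)) ^ ((1 : ℝ) / 4) := funext hα
  have hα' : HasDerivAt α
      ((1 / 4) * α t * (deriv b₂ t / b₂ t - deriv b₀ t / b₀ t)) t := by
    have h1 := hg'.rpow_const (p := (1 : ℝ) / 4) (Or.inl (ne_of_gt hgpos))
    rw [← hαfun] at h1
    have hsub : (b₂ t * c₀ / (b₀ t * c₂)) ^ ((1 : ℝ) / 4 - 1)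
        = α t / (b₂ t * c₀ / (b₀ t * c₂)) := by
      rw [Real.rpow_sub hgpos, Real.rpow_one, hα t]
    rw [hsub] at h1
    convert h1 using 1
    field_simp
  -- α t ^ 2 as a square root
  have hα2 : α t ^ 2 = Real.sqrt (b₂ t * c₀ / (b₀ t * c₂)) := by
    rw [hα t, ← Real.rpow_natCast ((b₂ t * c₀ / (b₀ t * c₂)) ^ ((1:ℝ)/4)) 2,
      ← Real.rpow_mul hgpos.le, Real.sqrt_eq_rpow]
    norm_num
  -- key algebraic identity 1 : α² b₀ = D c₀
  have key1 : α t ^ 2 * b₀ t = D t * c₀ := by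
    have hsq : (α t ^ 2 * b₀ t) ^ 2 = (D t * c₀) ^ 2 := by
      rw [mul_pow, mul_pow, hα2, hD t, Real.sq_sqrt hgpos.le,
        Real.sq_sqrt (by positivity : (0:ℝ) ≤ b₀ t * b₂ t / (c₀ * c₂))]
      field_simp
    have h := congrArg Real.sqrt hsq
    rwa [Real.sqrt_sq (by positivity), Real.sqrt_sq (by positivity)] at h
  -- key algebraic identity 2 : b₂ = D c₂ α²
  have key2 : b₂ t = D t * c₂ * α t ^ 2 := by
    have hsq : (b₂ t) ^ 2 = (D t * c₂ * α t ^ 2) ^ 2 := by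
      rw [mul_pow, mul_pow, hα2, hD t, Real.sq_sqrt hgpos.le,
        Real.sq_sqrt (by positivity : (0:ℝ) ≤ b₀ t * b₂ t / (c₀ * c₂))]
      field_simp
    have h := congrArg Real.sqrt hsq
    rwa [Real.sqrt_sq (by positivity), Real.sqrt_sq (by positivity)] at h
  -- key identity 3 : D c₁ = b₁ + (1/2)(b₂'/b₂ - b₀'/b₀)
  have key3 : D t * c₁ = b₁ t + (1 / 2) * (deriv b₂ t / b₂ t - deriv b₀ t / b₀ t) := by
    have hprod : D t * Real.sqrt (c₀ * c₂ / (b₀ t * b₂ t)) = 1 := by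
      rw [hD t, ← Real.sqrt_mul (by positivity : (0:ℝ) ≤ b₀ t * b₂ t / (c₀ * c₂)),
        show b₀ t * b₂ t / (c₀ * c₂) * (c₀ * c₂ / (b₀ t * b₂ t)) = 1 by field_simp]
      exact Real.sqrt_one
    calc D t * c₁ = D t * (Real.sqrt (c₀ * c₂ / (b₀ t * b₂ t)) *
          (b₁ t + (1 / 2) * (deriv b₂ t / b₂ t - deriv b₀ t / b₀ t))) := by rw [hint t]
      _ = (D t * Real.sqrt (c₀ * c₂ / (b₀ t * b₂ t))) *
          (b₁ t + (1 / 2) * (deriv b₂ t / b₂ t - deriv b₀ t / b₀ t)) := by ring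
      _ = b₁ t + (1 / 2) * (deriv b₂ t / b₂ t - deriv b₀ t / b₀ t) := by rw [hprod]; ring
  have hαne : α t ≠ 0 := hαpos.ne'
  have e1 : D t * c₀ * (α t)⁻¹ = α t * b₀ t := by
    field_simp
    linarith [key1]
  have e2 : D t * c₂ * α t = b₂ t * (α t)⁻¹ := by
    field_simp
    linarith [key2]
  constructor
  · have H := hα'.mul (hx t)
    refine H.congr_deriv ?_
    symm
    linear_combination (α t * x t / 2) * key3 + p t * e1
  · have hαinv : HasDerivAt (fun s => (α s)⁻¹)
        (-(1 / 4) * (α t)⁻¹ * (deriv b₂ t / b₂ t - deriv b₀ t / b₀ t)) t := by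
      have h := hα'.inv hαne
      refine h.congr_deriv ?_
      symm
      field_simp
    have H := hαinv.mul (hp t)
    refine H.congr_deriv ?_
    symm
    linear_combination (-(x t)) * e2 + (-((α t)⁻¹ * p t / 2)) * key3
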